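/- For all a, b, θ > 0, the function H(z) = τ(θ)z + log(z/(a+z)) + κ(θ)·log((a+b+z)/(a+z)), with κ(θ) = (1/θ² − 1/(a+θ)²)/(1/(a+θ)² − 1/(a+b+θ)²) and τ(θ) = a(a+b)/(θ²(2a+b+2θ)), satisfies H'(θ) = 0, H''(θ) = 0, and H'''(θ) > 0. -/

import Mathlib

/-- The slope parametrization `κ(θ)` for the Bernoulli-Exponential FPP model. -/
noncomputable def kappaFPP (a b θ : ℝ) : ℝ :=
  (1 / θ ^ 2 - 1 / (a + θ) ^ 2) / (1 / (a + θ) ^ 2 - 1 / (a + b + θ) ^ 2)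

/-- The time parametrization `τ(θ)` for the Bernoulli-Exponential FPP model. -/
noncomputable def tauFPP (a b θ : ℝ) : ℝ := a * (a + b) / (θ ^ 2 * (2 * a + b + 2 * θ))

/-- The steepest-descent function
`H(z) = τ(θ) z + log(z/(a+z)) + κ(θ) log((a+b+z)/(a+z))`. -/
noncomputable def HFPP (a b θ : ℝ) (z : ℝ) : ℝ :=
  tauFPP a b θ * z + Real.log (z / (a + z)) + kappaFPP a b θ * Real.log ((a + b + z) / (a + z))

noncomputable def GFPP (a b θ : ℝ) (z : ℝ) : ℝ :=
  tauFPP a b θ * z + Real.log z - Real.log (a + z) +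
    kappaFPP a b θ * (Real.log (a + b + z) - Real.log (a + z))

noncomputable def G1 (a b θ : ℝ) (z : ℝ) : ℝ :=
  tauFPP a b θ + z⁻¹ - (a + z)⁻¹ + kappaFPP a b θ * ((a + b + z)⁻¹ - (a + z)⁻¹)

noncomputable def G2 (a b θ : ℝ) (z : ℝ) : ℝ :=
  -(z ^ 2)⁻¹ + ((a + z) ^ 2)⁻¹ +
    kappaFPP a b θ * (-((a + b + z) ^ 2)⁻¹ + ((a + z) ^ 2)⁻¹)

noncomputable def G3 (a b θ : ℝ) (z : ℝ) : ℝ :=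
  2 * (z ^ 3)⁻¹ - 2 * ((a + z) ^ 3)⁻¹ +
    kappaFPP a b θ * (2 * ((a + b + z) ^ 3)⁻¹ - 2 * ((a + z) ^ 3)⁻¹)

lemma hasDerivAt_shift_log (c : ℝ) (z : ℝ) (h : c + z ≠ 0) :
    HasDerivAt (fun z => Real.log (c + z)) ((c + z)⁻¹) z := by
  have := (Real.hasDerivAt_log h).comp z ((hasDerivAt_id z).const_add c)
  simpa [Function.comp_def] using this

lemma hasDerivAt_inv_shift (c z : ℝ) (h : c + z ≠ 0) :
    HasDerivAt (fun z => (c + z)⁻¹) (-((c + z) ^ 2)⁻¹) z := by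
  have := ((hasDerivAt_id z).const_add c).inv h
  refine this.congr_deriv ?_
  simp only [id, Pi.pow_apply]
  field_simp

lemma hasDerivAt_invsq_shift (c z : ℝ) (h : c + z ≠ 0) :
    HasDerivAt (fun z => ((c + z) ^ 2)⁻¹) (-(2 * ((c + z) ^ 3)⁻¹)) z := by
  have := (((hasDerivAt_id z).const_add c).pow 2).inv (pow_ne_zero 2 h)
  refine this.congr_deriv ?_
  simp only [id, Pi.pow_apply]
  field_simp
  ring

lemma hasDerivAt_G (a b θ : ℝ) (ha : 0 < a) (hb : 0 < b) {z : ℝ} (hz : 0 < z) :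
    HasDerivAt (GFPP a b θ) (G1 a b θ z) z := by
  have h1 : z ≠ 0 := ne_of_gt hz
  have h2 : a + z ≠ 0 := by positivity
  have h3 : a + b + z ≠ 0 := by positivity
  have hfun : GFPP a b θ = fun x => tauFPP a b θ * id x +
      (Real.log x - Real.log (a + x)) +
      kappaFPP a b θ * (Real.log (a + b + x) - Real.log (a + x)) := by
    funext w; simp only [GFPP, id]; ring
  have hd : HasDerivAt (GFPP a b θ)
      (tauFPP a b θ * 1 + (z⁻¹ - (a + z)⁻¹) +
        kappaFPP a b θ * ((a + b + z)⁻¹ - (a + z)⁻¹)) z := by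
    rw [hfun]
    exact ((((hasDerivAt_id z).const_mul (tauFPP a b θ)).add
      ((Real.hasDerivAt_log h1).sub (hasDerivAt_shift_log a z h2))).add
      (((hasDerivAt_shift_log (a + b) z h3).sub (hasDerivAt_shift_log a z h2)).const_mul
        (kappaFPP a b θ)))
  convert hd using 1
  unfold G1; ring

lemma hasDerivAt_G1 (a b θ : ℝ) (ha : 0 < a) (hb : 0 < b) {z : ℝ} (hz : 0 < z) :
    HasDerivAt (G1 a b θ) (G2 a b θ z) z := by
  have h1 : (0:ℝ) + z ≠ 0 := by simpa using ne_of_gt hz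
  have h2 : a + z ≠ 0 := by positivity
  have h3 : a + b + z ≠ 0 := by positivity
  have hd : HasDerivAt (fun z => tauFPP a b θ + ((0:ℝ) + z)⁻¹ - (a + z)⁻¹ +
      kappaFPP a b θ * ((a + b + z)⁻¹ - (a + z)⁻¹))
      ((-((0 + z) ^ 2)⁻¹ - -((a + z) ^ 2)⁻¹) +
        kappaFPP a b θ * (-((a + b + z) ^ 2)⁻¹ - -((a + z) ^ 2)⁻¹)) z :=
    (((hasDerivAt_inv_shift 0 z h1).const_add _).sub (hasDerivAt_inv_shift a z h2)).add
      (((hasDerivAt_inv_shift (a + b) z h3).sub (hasDerivAt_inv_shift a z h2)).const_mul _)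
  have heq : (fun z => tauFPP a b θ + ((0:ℝ) + z)⁻¹ - (a + z)⁻¹ +
      kappaFPP a b θ * ((a + b + z)⁻¹ - (a + z)⁻¹)) = G1 a b θ := by
    funext w; simp only [zero_add]; rfl
  rw [heq] at hd
  convert hd using 1
  simp only [G2, zero_add]; ring

lemma hasDerivAt_G2 (a b θ : ℝ) (ha : 0 < a) (hb : 0 < b) {z : ℝ} (hz : 0 < z) :
    HasDerivAt (G2 a b θ) (G3 a b θ z) z := by
  have h1 : (0:ℝ) + z ≠ 0 := by simpa using ne_of_gt hz
  have h2 : a + z ≠ 0 := by positivity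
  have h3 : a + b + z ≠ 0 := by positivity
  have hd : HasDerivAt (fun z => -(((0:ℝ) + z) ^ 2)⁻¹ + ((a + z) ^ 2)⁻¹ +
      kappaFPP a b θ * (-((a + b + z) ^ 2)⁻¹ + ((a + z) ^ 2)⁻¹))
      ((-(-(2 * ((0 + z) ^ 3)⁻¹)) + -(2 * ((a + z) ^ 3)⁻¹)) +
        kappaFPP a b θ * (-(-(2 * ((a + b + z) ^ 3)⁻¹)) + -(2 * ((a + z) ^ 3)⁻¹))) z :=
    (((hasDerivAt_invsq_shift 0 z h1).neg).add (hasDerivAt_invsq_shift a z h2)).add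
      ((((hasDerivAt_invsq_shift (a + b) z h3).neg).add (hasDerivAt_invsq_shift a z h2)).const_mul _)
  have heq : (fun z => -(((0:ℝ) + z) ^ 2)⁻¹ + ((a + z) ^ 2)⁻¹ +
      kappaFPP a b θ * (-((a + b + z) ^ 2)⁻¹ + ((a + z) ^ 2)⁻¹)) = G2 a b θ := by
    funext w; simp only [zero_add]; rfl
  rw [heq] at hd
  convert hd using 1
  simp only [G3, zero_add]; ring

lemma denom_pos (a b θ : ℝ) (ha : 0 < a) (hb : 0 < b) (hθ : 0 < θ) :
    0 < 1 / (a + θ) ^ 2 - 1 / (a + b + θ) ^ 2 := by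
  rw [sub_pos]
  apply one_div_lt_one_div_of_lt (by positivity)
  nlinarith

lemma kappa_eq (a b θ : ℝ) (ha : 0 < a) (hb : 0 < b) (hθ : 0 < θ) :
    kappaFPP a b θ =
      a * (a + 2 * θ) * (a + b + θ) ^ 2 / (θ ^ 2 * (b * (2 * a + b + 2 * θ))) := by
  have hden := denom_pos a b θ ha hb hθ
  have h1 : θ ≠ 0 := ne_of_gt hθ
  have h2 : a + θ ≠ 0 := by positivity
  have h3 : a + b + θ ≠ 0 := by positivity
  rw [kappaFPP, div_eq_div_iff (ne_of_gt hden) (by positivity)]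
  field_simp
  ring

lemma G1_zero (a b θ : ℝ) (ha : 0 < a) (hb : 0 < b) (hθ : 0 < θ) : G1 a b θ θ = 0 := by
  have h1 : θ ≠ 0 := ne_of_gt hθ
  have h2 : a + θ ≠ 0 := by positivity
  have h3 : a + b + θ ≠ 0 := by positivity
  have h4 : (2 : ℝ) * a + b + 2 * θ ≠ 0 := by positivity
  simp only [G1, tauFPP, kappa_eq a b θ ha hb hθ]
  field_simp
  ring

lemma G2_zero (a b θ : ℝ) (ha : 0 < a) (hb : 0 < b) (hθ : 0 < θ) : G2 a b θ θ = 0 := by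
  have h1 : θ ≠ 0 := ne_of_gt hθ
  have h2 : a + θ ≠ 0 := by positivity
  have h3 : a + b + θ ≠ 0 := by positivity
  have h4 : (2 : ℝ) * a + b + 2 * θ ≠ 0 := by positivity
  simp only [G2, kappa_eq a b θ ha hb hθ]
  field_simp
  ring

lemma G3_pos (a b θ : ℝ) (ha : 0 < a) (hb : 0 < b) (hθ : 0 < θ) : 0 < G3 a b θ θ := by
  have h1 : θ ≠ 0 := ne_of_gt hθ
  have h2 : a + θ ≠ 0 := by positivity
  have h3 : a + b + θ ≠ 0 := by positivity
  have h4 : (2 : ℝ) * a + b + 2 * θ ≠ 0 := by positivity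
  have e : G3 a b θ θ =
      2 * a * b * (a + b) * (a + θ) ^ 2 * (2 * a + b + 3 * θ) /
        (θ ^ 3 * (a + θ) ^ 3 * (a + b + θ) * (b * (2 * a + b + 2 * θ))) := by
    simp only [G3, kappa_eq a b θ ha hb hθ]
    rw [eq_div_iff (by positivity)]
    field_simp
    ring
  rw [e]
  apply div_pos
  · exact mul_pos (mul_pos (mul_pos (mul_pos (mul_pos (by norm_num : (0:ℝ) < 2) ha) hb)
      (by linarith)) (pow_pos (by linarith) 2)) (by linarith)
  · exact mul_pos (mul_pos (mul_pos (pow_pos hθ 3) (pow_pos (by linarith) 3))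
      (by linarith)) (mul_pos hb (by linarith))

/-- `θ` is a double critical point of `H`, with positive third derivative. -/
theorem HFPP_critical_point (a b θ : ℝ) (ha : 0 < a) (hb : 0 < b) (hθ : 0 < θ) :
    deriv (HFPP a b θ) θ = 0 ∧ iteratedDeriv 2 (HFPP a b θ) θ = 0 ∧
      0 < iteratedDeriv 3 (HFPP a b θ) θ := by
  have hs : Set.Ioi (0 : ℝ) ∈ nhds θ := Ioi_mem_nhds hθ
  have hHG : HFPP a b θ =ᶠ[nhds θ] GFPP a b θ := by
    filter_upwards [hs] with z hz
    have hz' : 0 < z := hz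
    have h1 : z ≠ 0 := ne_of_gt hz'
    have h2 : a + z ≠ 0 := by positivity
    have h3 : a + b + z ≠ 0 := by positivity
    simp only [HFPP, GFPP]
    rw [Real.log_div h1 h2, Real.log_div h3 h2]
    ring
  have hG1 : deriv (HFPP a b θ) =ᶠ[nhds θ] G1 a b θ := by
    filter_upwards [hHG.deriv, hs] with z h hz
    rw [h, (hasDerivAt_G a b θ ha hb hz).deriv]
  have hG2 : deriv (deriv (HFPP a b θ)) =ᶠ[nhds θ] G2 a b θ := by
    filter_upwards [hG1.deriv, hs] with z h hz
    rw [h, (hasDerivAt_G1 a b θ ha hb hz).deriv]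
  refine ⟨?_, ?_, ?_⟩
  · rw [hG1.self_of_nhds]
    exact G1_zero a b θ ha hb hθ
  · rw [iteratedDeriv_succ, iteratedDeriv_one, hG2.self_of_nhds]
    exact G2_zero a b θ ha hb hθ
  · rw [iteratedDeriv_succ, iteratedDeriv_succ, iteratedDeriv_one,
      hG2.deriv.self_of_nhds, (hasDerivAt_G2 a b θ ha hb hθ).deriv]
    exact G3_pos a b θ ha hb hθ
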